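/- Let (A, B, C) be a recollement of abelian categories in which A, B, C have enough projectives and enough injectives, and let (X, Y) be a cotorsion pair in B. Assume that i_*(i^*(X)) lies in X for every X in X, i_*(i^*(Y)) lies in Y for every Y in Y, j_*(j^*(Y)) lies in Y for every Y in Y, and that the functors i^* and i^! are exact. Then: (1) the pair (i^*(X), i^!(Y)) is a cotorsion pair in A, and moreover the classes i^!(Y) and i^*(Y) coincide; (2) the pair (j^*(X), j^*(Y)) is a cotorsion pair in C; (3) if (X, Y) is hereditary, then so are (i^*(X), i^!(Y)) and (j^*(X), j^*(Y)). Here, for a functor F and a class S of objects, F(S) denotes the class of objects isomorphic to F(S) for some S in S. -/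

import Mathlib

open CategoryTheory CategoryTheory.Limits

universe w₁ w₂ w₃ v₁ v₂ v₃ u₁ u₂ u₃

namespace Paper

/-- A recollement of abelian categories `(𝒜, ℬ, 𝒞)`. -/
structure Recollement (𝒜 : Type u₁) (ℬ : Type u₂) (𝒞 : Type u₃)
    [Category.{v₁} 𝒜] [Category.{v₂} ℬ] [Category.{v₃} 𝒞]
    [Preadditive 𝒜] [Preadditive ℬ] [Preadditive 𝒞] where
  /-- `i^* : ℬ → 𝒜` -/
  iStar : ℬ ⥤ 𝒜
  /-- `i_* : 𝒜 → ℬ` -/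
  iIns : 𝒜 ⥤ ℬ
  /-- `i^! : ℬ → 𝒜` -/
  iShriek : ℬ ⥤ 𝒜
  /-- `j_! : 𝒞 → ℬ` -/
  jShriek : 𝒞 ⥤ ℬ
  /-- `j^* : ℬ → 𝒞` -/
  jStar : ℬ ⥤ 𝒞
  /-- `j_* : 𝒞 → ℬ` -/
  jIns : 𝒞 ⥤ ℬ
  iStar_additive : iStar.Additive
  iIns_additive : iIns.Additive
  iShriek_additive : iShriek.Additive
  jShriek_additive : jShriek.Additive
  jStar_additive : jStar.Additive
  jIns_additive : jIns.Additive
  /-- `i^* ⊣ i_*` -/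
  adj₁ : iStar ⊣ iIns
  /-- `i_* ⊣ i^!` -/
  adj₂ : iIns ⊣ iShriek
  /-- `j_! ⊣ j^*` -/
  adj₃ : jShriek ⊣ jStar
  /-- `j^* ⊣ j_*` -/
  adj₄ : jStar ⊣ jIns
  iIns_full : iIns.Full
  iIns_faithful : iIns.Faithful
  jShriek_full : jShriek.Full
  jShriek_faithful : jShriek.Faithful
  jIns_full : jIns.Full
  jIns_faithful : jIns.Faithful
  /-- an object `B` of `ℬ` satisfies `j^*(B) = 0` iff `B ≅ i_*(A)` for some `A` -/
  ker_jStar : ∀ B : ℬ, IsZero (jStar.obj B) ↔ ∃ A : 𝒜, Nonempty (iIns.obj A ≅ B)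

variable {D : Type u₁} [Category.{v₁} D] [Abelian D]

/-- The right perpendicular class `X^⊥` of a class of objects:
objects `M` with `Ext^i(A, M) = 0` for all `A` in the class and all `i ≥ 1`. -/
def perp [HasExt.{w₁} D] (X : D → Prop) : D → Prop :=
  fun M => ∀ A, X A → ∀ i : ℕ, 1 ≤ i → Subsingleton (Abelian.Ext A M i)

/-- `CoresSeq W n M Z` : there is an exact sequence
`0 → M → W₀ → ⋯ → W_{n-1} → Z → 0` with each `Wᵢ` in `W`. -/
def CoresSeq (W : D → Prop) : ℕ → D → D → Prop
  | 0, M, Z => Nonempty (M ≅ Z)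
  | n + 1, M, Z => ∃ (W₀ K : D) (f : M ⟶ W₀) (g : W₀ ⟶ K) (h : f ≫ g = 0),
      W W₀ ∧ (ShortComplex.mk f g h).ShortExact ∧ CoresSeq W n K Z

/-- The `W`-coresolution dimension of an object, valued in `ℕ∞`:
the least `n` such that there is an exact sequence `0 → M → W₀ → ⋯ → Wₙ → 0`
with all `Wᵢ` in `W` (and `∞` if there is no such sequence). -/
noncomputable def coresDim (W : D → Prop) (M : D) : ℕ∞ :=
  sInf {n : ℕ∞ | ∃ m : ℕ, n = (m : ℕ∞) ∧ ∃ Z, W Z ∧ CoresSeq W m M Z}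

/-- The `W`-coresolution dimension of a class of objects: the supremum of the
coresolution dimensions of its members. -/
noncomputable def coresDimClass (W S : D → Prop) : ℕ∞ :=
  ⨆ (M : D) (_ : S M), coresDim W M

/-- The essential image of a class of objects under a functor. -/
def imageClass {E : Type u₂} [Category.{v₂} E] (F : D ⥤ E) (S : D → Prop) : E → Prop :=
  fun Y => ∃ M, S M ∧ Nonempty (F.obj M ≅ Y)

variable {𝒜 : Type u₁} {ℬ : Type u₂} {𝒞 : Type u₃}
  [Category.{v₁} 𝒜] [Category.{v₂} ℬ] [Category.{v₃} 𝒞]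
  [Abelian 𝒜] [Abelian ℬ] [Abelian 𝒞]
  [EnoughProjectives 𝒜] [EnoughInjectives 𝒜]
  [EnoughProjectives ℬ] [EnoughInjectives ℬ]
  [EnoughProjectives 𝒞] [EnoughInjectives 𝒞]
variable [HasExt.{w₁} 𝒜] [HasExt.{w₂} ℬ] [HasExt.{w₃} 𝒞]

section

variable {D : Type u₁} [Category.{v₁} D] [Abelian D] [HasExt.{w₁} D]

/-- A cotorsion pair `(X, Y)` in an abelian category: both classes are closed under
isomorphisms, `Ext¹(X, Y) = 0`, and every object admits the two approximation
short exact sequences. -/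
structure IsCotorsionPair (X Y : D → Prop) : Prop where
  closedIso_left : ∀ A B : D, (A ≅ B) → X A → X B
  closedIso_right : ∀ A B : D, (A ≅ B) → Y A → Y B
  ext_zero : ∀ A B : D, X A → Y B → Subsingleton (Abelian.Ext A B 1)
  exists_left : ∀ M : D, ∃ (Y₁ X₁ : D) (f : Y₁ ⟶ X₁) (g : X₁ ⟶ M) (w : f ≫ g = 0),
      Y Y₁ ∧ X X₁ ∧ (ShortComplex.mk f g w).ShortExact
  exists_right : ∀ M : D, ∃ (Y₁ X₁ : D) (f : M ⟶ Y₁) (g : Y₁ ⟶ X₁) (w : f ≫ g = 0),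
      Y Y₁ ∧ X X₁ ∧ (ShortComplex.mk f g w).ShortExact

/-- A pair of classes is hereditary if `Ext^i(X, Y) = 0` for all `i ≥ 2`. -/
def Hereditary (X Y : D → Prop) : Prop :=
  ∀ A B : D, X A → Y B → ∀ i : ℕ, 2 ≤ i → Subsingleton (Abelian.Ext A B i)

end


section ExtTransfer


variable {C : Type*} {D : Type*} [Category C] [Category D] [Abelian C] [Abelian D]

/-- The adjunction between functors on homological complexes induced by an
adjunction of additive functors. -/
noncomputable def mapHCAdj (F : C ⥤ D) (G : D ⥤ C) (adj : F ⊣ G)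
    [F.Additive] [G.Additive] :
    F.mapHomologicalComplex (ComplexShape.up ℤ) ⊣ G.mapHomologicalComplex (ComplexShape.up ℤ) :=
  Adjunction.mkOfUnitCounit
    { unit :=
        { app := fun K =>
            { f := fun i => adj.unit.app (K.X i)
              comm' := by intros; simp; exact (adj.unit.naturality _).symm }
          naturality := by intros; ext; simp; exact adj.unit.naturality _ }
      counit :=
        { app := fun K =>
            { f := fun i => adj.counit.app (K.X i)
              comm' := by intros; simp; exact (adj.counit.naturality _).symm }
          naturality := by intros; ext; simp; exact adj.counit.naturality _ }
      left_triangle := by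
        ext K i
        simp
        exact adj.left_triangle_components (K.X i)
      right_triangle := by
        ext K i
        simp
        exact adj.right_triangle_components (K.X i) }

noncomputable def derivedAdj (F : C ⥤ D) (G : D ⥤ C) (adj : F ⊣ G) [F.Additive] [G.Additive]
    [PreservesFiniteLimits F] [PreservesFiniteColimits F]
    [PreservesFiniteLimits G] [PreservesFiniteColimits G]
    [HasDerivedCategory C] [HasDerivedCategory D] :
    F.mapDerivedCategory ⊣ G.mapDerivedCategory :=
  haveI : CatCommSq (F.mapHomologicalComplex (ComplexShape.up ℤ)) DerivedCategory.Q
      DerivedCategory.Q F.mapDerivedCategory := ⟨F.mapDerivedCategoryFactors.symm⟩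
  haveI : CatCommSq (G.mapHomologicalComplex (ComplexShape.up ℤ)) DerivedCategory.Q
      DerivedCategory.Q G.mapDerivedCategory := ⟨G.mapDerivedCategoryFactors.symm⟩
  (mapHCAdj F G adj).localization DerivedCategory.Q (HomologicalComplex.quasiIso _ _)
    DerivedCategory.Q (HomologicalComplex.quasiIso _ _)
    F.mapDerivedCategory G.mapDerivedCategory

/-- Compatibility of `mapDerivedCategory` with single functors. -/
noncomputable def mapDCSingleIso (F : C ⥤ D) [F.Additive]
    [PreservesFiniteLimits F] [PreservesFiniteColimits F]
    [HasDerivedCategory C] [HasDerivedCategory D] (Z : C) :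
    F.mapDerivedCategory.obj ((DerivedCategory.singleFunctor C 0).obj Z) ≅
      (DerivedCategory.singleFunctor D 0).obj (F.obj Z) :=
  F.mapDerivedCategory.mapIso
      (((SingleFunctors.evaluation _ _ (0 : ℤ)).mapIso
        (DerivedCategory.singleFunctorsPostcompQIso C)).app Z)
    ≪≫ F.mapDerivedCategoryFactors.app ((HomologicalComplex.single C (ComplexShape.up ℤ) 0).obj Z)
    ≪≫ DerivedCategory.Q.mapIso
        ((HomologicalComplex.singleMapHomologicalComplex F (ComplexShape.up ℤ) 0).app Z)
    ≪≫ (((SingleFunctors.evaluation _ _ (0 : ℤ)).mapIso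
        (DerivedCategory.singleFunctorsPostcompQIso D)).app (F.obj Z)).symm

open Abelian in
lemma ext_transfer (F : C ⥤ D) (G : D ⥤ C) (adj : F ⊣ G) [F.Additive] [G.Additive]
    [PreservesFiniteLimits F] [PreservesFiniteColimits F]
    [PreservesFiniteLimits G] [PreservesFiniteColimits G]
    [HasExt.{u} C] [HasExt.{u'} D] (A : C) (B : D) (n : ℕ) :
    Subsingleton (Ext (F.obj A) B n) ↔ Subsingleton (Ext A (G.obj B) n) := by
  letI : HasDerivedCategory C := HasDerivedCategory.standard C
  letI : HasDerivedCategory D := HasDerivedCategory.standard D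
  have e₁ : Ext (F.obj A) B n ≃
      ((DerivedCategory.singleFunctor D 0).obj (F.obj A) ⟶
        ((DerivedCategory.singleFunctor D 0).obj B)⟦(n : ℤ)⟧) := Ext.homEquiv
  have e₂ : ((DerivedCategory.singleFunctor D 0).obj (F.obj A) ⟶
        ((DerivedCategory.singleFunctor D 0).obj B)⟦(n : ℤ)⟧) ≃
      (F.mapDerivedCategory.obj ((DerivedCategory.singleFunctor C 0).obj A) ⟶
        ((DerivedCategory.singleFunctor D 0).obj B)⟦(n : ℤ)⟧) :=
    (Iso.homCongr (mapDCSingleIso F A) (Iso.refl _)).symm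
  have e₃ := (derivedAdj F G adj).homEquiv
    ((DerivedCategory.singleFunctor C 0).obj A)
    (((DerivedCategory.singleFunctor D 0).obj B)⟦(n : ℤ)⟧)
  have e₄ : ((DerivedCategory.singleFunctor C 0).obj A ⟶
        G.mapDerivedCategory.obj (((DerivedCategory.singleFunctor D 0).obj B)⟦(n : ℤ)⟧)) ≃
      ((DerivedCategory.singleFunctor C 0).obj A ⟶
        ((DerivedCategory.singleFunctor C 0).obj (G.obj B))⟦(n : ℤ)⟧) :=
    Iso.homCongr (Iso.refl _)
      ((G.mapDerivedCategory.commShiftIso (n : ℤ)).app ((DerivedCategory.singleFunctor D 0).obj B)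
        ≪≫ (shiftFunctor _ (n : ℤ)).mapIso (mapDCSingleIso G B))
  have e₅ : Ext A (G.obj B) n ≃
      ((DerivedCategory.singleFunctor C 0).obj A ⟶
        ((DerivedCategory.singleFunctor C 0).obj (G.obj B))⟦(n : ℤ)⟧) := Ext.homEquiv
  exact (e₁.trans (e₂.trans (e₃.trans (e₄.trans e₅.symm)))).subsingleton_congr

end ExtTransfer

universe we in
lemma subsingleton_ext_of_iso {D : Type*} [Category D] [Abelian D] [HasExt.{we} D]
    {A B A' B' : D} (eA : A ≅ A') (eB : B ≅ B') (n : ℕ)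
    (h : Subsingleton (Abelian.Ext A B n)) : Subsingleton (Abelian.Ext A' B' n) := by
  letI := HasDerivedCategory.standard D
  refine (Abelian.Ext.homEquiv.subsingleton_congr).2 ?_
  exact (Iso.homCongr ((DerivedCategory.singleFunctor D 0).mapIso eA)
    ((shiftFunctor _ (n : ℤ)).mapIso ((DerivedCategory.singleFunctor D 0).mapIso eB))).subsingleton_congr.1
    ((Abelian.Ext.homEquiv.subsingleton_congr).1 h)

section RecollementLemmas


variable {𝒜 : Type u₁} {ℬ : Type u₂} {𝒞 : Type u₃}
  [Category.{v₁} 𝒜] [Category.{v₂} ℬ] [Category.{v₃} 𝒞]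
  [Abelian 𝒜] [Abelian ℬ] [Abelian 𝒞]
  (R : Recollement 𝒜 ℬ 𝒞)

lemma jStar_pfl : PreservesFiniteLimits R.jStar := by
  haveI := R.adj₃.rightAdjoint_preservesLimits
  exact PreservesLimitsOfSize.preservesFiniteLimits.{0,0} _

lemma jStar_pfc : PreservesFiniteColimits R.jStar := by
  haveI := R.adj₄.leftAdjoint_preservesColimits
  exact PreservesColimitsOfSize.preservesFiniteColimits.{0,0} _

lemma iIns_pfl : PreservesFiniteLimits R.iIns := by
  haveI := R.adj₁.rightAdjoint_preservesLimits
  exact PreservesLimitsOfSize.preservesFiniteLimits.{0,0} _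

lemma iIns_pfc : PreservesFiniteColimits R.iIns := by
  haveI := R.adj₂.leftAdjoint_preservesColimits
  exact PreservesColimitsOfSize.preservesFiniteColimits.{0,0} _

lemma jIns_pfl : PreservesFiniteLimits R.jIns := by
  haveI := R.adj₄.rightAdjoint_preservesLimits
  exact PreservesLimitsOfSize.preservesFiniteLimits.{0,0} _

lemma isZero_jStar_iIns (A : 𝒜) : IsZero (R.jStar.obj (R.iIns.obj A)) :=
  (R.ker_jStar _).2 ⟨A, ⟨Iso.refl _⟩⟩

lemma isZero_iStar_jShriek (c : 𝒞) : IsZero (R.iStar.obj (R.jShriek.obj c)) := by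
  rw [IsZero.iff_id_eq_zero]
  apply ((R.adj₁.homEquiv _ _).trans (R.adj₃.homEquiv _ _)).injective
  exact (isZero_jStar_iIns R _).eq_of_tgt _ _

lemma isZero_iShriek_jIns (c : 𝒞) : IsZero (R.iShriek.obj (R.jIns.obj c)) := by
  rw [IsZero.iff_id_eq_zero]
  apply ((R.adj₂.homEquiv _ _).symm.trans (R.adj₄.homEquiv _ _).symm).injective
  exact (isZero_jStar_iIns R _).eq_of_src _ _

lemma isZero_of_isZero_jStar_iShriek {X : ℬ} (h1 : IsZero (R.jStar.obj X))
    (h2 : IsZero (R.iShriek.obj X)) : IsZero X := by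
  haveI := R.iIns_additive
  haveI := R.iShriek_additive
  haveI := R.iIns_full
  haveI := R.iIns_faithful
  obtain ⟨A, ⟨e⟩⟩ := (R.ker_jStar X).1 h1
  have hA : IsZero A :=
    IsZero.of_iso h2 (asIso (R.adj₂.unit.app A) ≪≫ R.iShriek.mapIso e)
  exact IsZero.of_iso (R.iIns.map_isZero hA) e.symm

lemma isIso_of_recollement {X Y : ℬ} (f : X ⟶ Y)
    [PreservesFiniteLimits R.iShriek] [PreservesFiniteColimits R.iShriek]
    (h1 : IsIso (R.jStar.map f)) (h2 : IsIso (R.iShriek.map f)) : IsIso f := by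
  haveI := R.jStar_additive
  haveI := R.iShriek_additive
  haveI := jStar_pfl R
  haveI := jStar_pfc R
  have hk : IsZero (kernel f) := by
    apply isZero_of_isZero_jStar_iShriek R
    · exact IsZero.of_iso
        (IsZero.of_mono_eq_zero _ (kernel.ι_of_mono (R.jStar.map f)))
        (PreservesKernel.iso R.jStar f)
    · exact IsZero.of_iso
        (IsZero.of_mono_eq_zero _ (kernel.ι_of_mono (R.iShriek.map f)))
        (PreservesKernel.iso R.iShriek f)
  have hc : IsZero (cokernel f) := by
    apply isZero_of_isZero_jStar_iShriek R
    · exact IsZero.of_iso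
        (IsZero.of_epi_eq_zero _ (cokernel.π_of_epi (R.jStar.map f)))
        (PreservesCokernel.iso R.jStar f)
    · exact IsZero.of_iso
        (IsZero.of_epi_eq_zero _ (cokernel.π_of_epi (R.iShriek.map f)))
        (PreservesCokernel.iso R.iShriek f)
  have : Mono f := Abelian.mono_of_kernel_ι_eq_zero _ (hk.eq_zero_of_src _)
  have : Epi f := Abelian.epi_of_cokernel_π_eq_zero _ (hc.eq_zero_of_tgt _)
  exact isIso_of_mono_of_epi f

lemma counit₂_comp_unit₄ (B : ℬ) :
    R.adj₂.counit.app B ≫ R.adj₄.unit.app B = 0 := by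
  have : ∀ f g : (R.iIns.obj (R.iShriek.obj B) ⟶ R.jIns.obj (R.jStar.obj B)), f = g := by
    intro f g
    apply (R.adj₄.homEquiv _ _).symm.injective
    exact (isZero_jStar_iIns R _).eq_of_src _ _
  exact this _ 0

lemma isIso_iShriek_map_counit₂ (B : ℬ) : IsIso (R.iShriek.map (R.adj₂.counit.app B)) := by
  haveI := R.iIns_full
  haveI := R.iIns_faithful
  have h : IsIso (R.adj₂.unit.app (R.iShriek.obj B) ≫
      R.iShriek.map (R.adj₂.counit.app B)) := by
    rw [R.adj₂.right_triangle_components B]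
    exact ⟨⟨𝟙 _, by simp, by simp⟩⟩
  exact IsIso.of_isIso_comp_left (R.adj₂.unit.app (R.iShriek.obj B)) _

lemma isIso_jStar_map_unit₄ (B : ℬ) : IsIso (R.jStar.map (R.adj₄.unit.app B)) := by
  haveI := R.jIns_full
  haveI := R.jIns_faithful
  have h : IsIso (R.jStar.map (R.adj₄.unit.app B) ≫
      R.adj₄.counit.app (R.jStar.obj B)) := by
    rw [R.adj₄.left_triangle_components B]
    exact ⟨⟨𝟙 _, by simp, by simp⟩⟩
  exact IsIso.of_isIso_comp_right _ (R.adj₄.counit.app (R.jStar.obj B))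

lemma mono_counit₂ (B : ℬ)
    [PreservesFiniteLimits R.iShriek] [PreservesFiniteColimits R.iShriek] :
    Mono (R.adj₂.counit.app B) := by
  haveI := R.jStar_additive
  haveI := R.iShriek_additive
  haveI := jStar_pfl R
  haveI := isIso_iShriek_map_counit₂ R B
  have hk : IsZero (kernel (R.adj₂.counit.app B)) := by
    apply isZero_of_isZero_jStar_iShriek R
    · exact IsZero.of_iso
        (IsZero.of_mono (kernel.ι (R.jStar.map (R.adj₂.counit.app B)))
          (isZero_jStar_iIns R _))
        (PreservesKernel.iso R.jStar _)
    · exact IsZero.of_iso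
        (IsZero.of_mono_eq_zero _ (kernel.ι_of_mono (R.iShriek.map (R.adj₂.counit.app B))))
        (PreservesKernel.iso R.iShriek _)
  exact Abelian.mono_of_kernel_ι_eq_zero _ (hk.eq_zero_of_src _)

lemma isIso_jStar_map_cokernel_π_counit₂ (B : ℬ) :
    IsIso (R.jStar.map (cokernel.π (R.adj₂.counit.app B))) := by
  haveI := R.jStar_additive
  haveI := jStar_pfc R
  set d := R.adj₂.counit.app B
  have hz : R.jStar.map d = 0 := (isZero_jStar_iIns R _).eq_zero_of_src _
  have l := isColimitCoforkMapOfIsColimit' R.jStar (cokernel.condition d) (cokernelIsCokernel d)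
  haveI : IsIso (cokernel.π (0 : R.jStar.obj (R.iIns.obj (R.iShriek.obj B)) ⟶
      R.jStar.obj B)) := inferInstance
  haveI : IsIso (cokernel.π (R.jStar.map d)) :=
    IsIso.of_isIso_fac_right (π_comp_cokernelIsoOfEq_hom hz)
  have e := l.coconePointUniqueUpToIso (cokernelIsCokernel (R.jStar.map d))
  have he := l.comp_coconePointUniqueUpToIso_hom (cokernelIsCokernel (R.jStar.map d))
      WalkingParallelPair.one
  exact IsIso.of_isIso_fac_right (show R.jStar.map (cokernel.π d) ≫ _ = cokernel.π (R.jStar.map d) by simpa using he)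

lemma isIso_vdesc (B : ℬ)
    [PreservesFiniteLimits R.iShriek] [PreservesFiniteColimits R.iShriek] :
    IsIso (cokernel.desc (R.adj₂.counit.app B) (R.adj₄.unit.app B)
      (counit₂_comp_unit₄ R B)) := by
  haveI := R.jStar_additive
  haveI := R.iShriek_additive
  set d := R.adj₂.counit.app B
  set u := R.adj₄.unit.app B
  set v := cokernel.desc d u (counit₂_comp_unit₄ R B)
  apply isIso_of_recollement R
  · have he : R.jStar.map (cokernel.π d) ≫ R.jStar.map v = R.jStar.map u := by
      rw [← R.jStar.map_comp, cokernel.π_desc]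
    haveI := isIso_jStar_map_cokernel_π_counit₂ R B
    haveI := isIso_jStar_map_unit₄ R B
    exact IsIso.of_isIso_fac_left he
  · haveI := isIso_iShriek_map_counit₂ R B
    have hsrc : IsZero (R.iShriek.obj (cokernel d)) :=
      IsZero.of_iso
        (IsZero.of_epi_eq_zero _ (cokernel.π_of_epi (R.iShriek.map d)))
        (PreservesCokernel.iso R.iShriek _)
    have htgt : IsZero (R.iShriek.obj (R.jIns.obj (R.jStar.obj B))) :=
      isZero_iShriek_jIns R _
    exact ⟨⟨htgt.to_ _, hsrc.eq_of_src _ _, htgt.eq_of_src _ _⟩⟩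

lemma isZero_iStar_jIns (c : 𝒞)
    [PreservesFiniteLimits R.iStar] [PreservesFiniteColimits R.iStar]
    [PreservesFiniteLimits R.iShriek] [PreservesFiniteColimits R.iShriek] :
    IsZero (R.iStar.obj (R.jIns.obj c)) := by
  haveI := R.iStar_additive
  haveI := R.jShriek_full
  haveI := R.jShriek_faithful
  set B := R.jShriek.obj c
  set d := R.adj₂.counit.app B
  haveI := isIso_vdesc R B
  have h1 : IsZero (cokernel (R.iStar.map d)) :=
    IsZero.of_epi (cokernel.π _) (isZero_iStar_jShriek R c)
  have h2 : IsZero (R.iStar.obj (R.jIns.obj (R.jStar.obj B))) :=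
    IsZero.of_iso h1
      ((R.iStar.mapIso (asIso (cokernel.desc d (R.adj₄.unit.app B)
        (counit₂_comp_unit₄ R B)))).symm ≪≫ PreservesCokernel.iso R.iStar d)
  exact IsZero.of_iso h2 (R.iStar.mapIso (R.jIns.mapIso (asIso (R.adj₃.unit.app c))))

/-- Pointwise isomorphism `i^! ≅ i^*` when both are exact. -/
noncomputable def iShriekIsoIStar (B : ℬ)
    [PreservesFiniteLimits R.iStar] [PreservesFiniteColimits R.iStar]
    [PreservesFiniteLimits R.iShriek] [PreservesFiniteColimits R.iShriek] :
    R.iShriek.obj B ≅ R.iStar.obj B := by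
  haveI := R.iStar_additive
  haveI := R.iIns_full
  haveI := R.iIns_faithful
  set d := R.adj₂.counit.app B
  haveI := mono_counit₂ R B
  haveI := isIso_vdesc R B
  have hmono : Mono (R.iStar.map d) := by
    have hk : IsZero (kernel (R.iStar.map d)) :=
      IsZero.of_iso
        (R.iStar.map_isZero (IsZero.of_mono_eq_zero _ (kernel.ι_of_mono d)))
        (PreservesKernel.iso R.iStar d).symm
    exact Abelian.mono_of_kernel_ι_eq_zero _ (hk.eq_zero_of_src _)
  have hepi : Epi (R.iStar.map d) := by
    have hc : IsZero (cokernel (R.iStar.map d)) := by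
      refine IsZero.of_iso ?_ (PreservesCokernel.iso R.iStar d).symm
      refine IsZero.of_iso (isZero_iStar_jIns R (R.jStar.obj B))
        (R.iStar.mapIso (asIso (cokernel.desc d (R.adj₄.unit.app B)
          (counit₂_comp_unit₄ R B))))
    exact Abelian.epi_of_cokernel_π_eq_zero _ (hc.eq_zero_of_tgt _)
  haveI : IsIso (R.iStar.map d) := isIso_of_mono_of_epi _
  exact (asIso (R.adj₁.counit.app (R.iShriek.obj B))).symm ≪≫ asIso (R.iStar.map d)

lemma jIns_preservesEpi [PreservesFiniteColimits R.iShriek] :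
    R.jIns.PreservesEpimorphisms := by
  haveI := R.jStar_additive
  haveI := R.iShriek_additive
  haveI := R.jIns_additive
  haveI := R.jIns_full
  haveI := R.jIns_faithful
  haveI := jStar_pfc R
  haveI := jIns_pfl R
  constructor
  intro X Y f hf
  apply Abelian.epi_of_cokernel_π_eq_zero
  apply IsZero.eq_zero_of_tgt
  apply isZero_of_isZero_jStar_iShriek R
  · have hn : R.jStar.map (R.jIns.map f) ≫ R.adj₄.counit.app Y =
        R.adj₄.counit.app X ≫ f := by
      simpa using R.adj₄.counit.naturality f
    have ha : R.jStar.map (R.jIns.map f) =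
        (R.adj₄.counit.app X ≫ f) ≫ inv (R.adj₄.counit.app Y) := by
      rw [IsIso.eq_comp_inv]
      exact hn
    haveI : Epi f := hf
    haveI hepi : Epi (R.jStar.map (R.jIns.map f)) := by
      rw [ha]
      infer_instance
    exact IsZero.of_iso
      (IsZero.of_epi_eq_zero _ (cokernel.π_of_epi (R.jStar.map (R.jIns.map f))))
      (PreservesCokernel.iso R.jStar _)
  · exact IsZero.of_iso
      (IsZero.of_epi (cokernel.π (R.iShriek.map (R.jIns.map f)))
        (isZero_iShriek_jIns R Y))
      (PreservesCokernel.iso R.iShriek _)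

lemma jIns_pfc [PreservesFiniteColimits R.iShriek] : PreservesFiniteColimits R.jIns := by
  haveI := R.jIns_additive
  haveI := jIns_pfl R
  haveI := jIns_preservesEpi R
  haveI : R.jIns.PreservesHomology :=
    Functor.preservesHomology_of_preservesEpis_and_kernels _
  exact Functor.preservesFiniteColimits_of_preservesHomology _

end RecollementLemmas

/-- Theorem 4.6(1)(2)(3) : gluing a cotorsion pair of `ℬ` to cotorsion pairs
of `𝒜` and `𝒞`. -/
theorem stmt_17 (R : Recollement 𝒜 ℬ 𝒞)
    (X Y : ℬ → Prop) (hXY : IsCotorsionPair X Y)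
    (h₁ : ∀ M, X M → X (R.iIns.obj (R.iStar.obj M)))
    (h₂ : ∀ M, Y M → Y (R.iIns.obj (R.iStar.obj M)))
    (h₃ : ∀ M, Y M → Y (R.jIns.obj (R.jStar.obj M)))
    [PreservesFiniteLimits R.iStar] [PreservesFiniteColimits R.iStar]
    [PreservesFiniteLimits R.iShriek] [PreservesFiniteColimits R.iShriek] :
    (IsCotorsionPair (imageClass R.iStar X) (imageClass R.iShriek Y) ∧
      imageClass R.iShriek Y = imageClass R.iStar Y) ∧
    IsCotorsionPair (imageClass R.jStar X) (imageClass R.jStar Y) ∧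
    (Hereditary X Y →
      Hereditary (imageClass R.iStar X) (imageClass R.iShriek Y) ∧
      Hereditary (imageClass R.jStar X) (imageClass R.jStar Y)) := by
  haveI := R.iStar_additive
  haveI := R.iIns_additive
  haveI := R.iShriek_additive
  haveI := R.jShriek_additive
  haveI := R.jStar_additive
  haveI := R.jIns_additive
  haveI := R.iIns_full
  haveI := R.iIns_faithful
  haveI := R.jShriek_full
  haveI := R.jShriek_faithful
  haveI := R.jIns_full
  haveI := R.jIns_faithful
  haveI := iIns_pfl R
  haveI := iIns_pfc R
  haveI := jStar_pfl R
  haveI := jStar_pfc R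
  haveI := jIns_pfl R
  haveI := jIns_pfc R
  have transA : ∀ (X₀ Y₀ : ℬ) (n : ℕ),
      Subsingleton (Abelian.Ext (R.iIns.obj (R.iStar.obj X₀)) Y₀ n) →
      Subsingleton (Abelian.Ext (R.iStar.obj X₀) (R.iShriek.obj Y₀) n) := fun X₀ Y₀ n h =>
    (ext_transfer R.iIns R.iShriek R.adj₂ (R.iStar.obj X₀) Y₀ n).1 h
  have transC : ∀ (X₀ Y₀ : ℬ) (n : ℕ),
      Subsingleton (Abelian.Ext X₀ (R.jIns.obj (R.jStar.obj Y₀)) n) →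
      Subsingleton (Abelian.Ext (R.jStar.obj X₀) (R.jStar.obj Y₀) n) := fun X₀ Y₀ n h =>
    (ext_transfer R.jStar R.jIns R.adj₄ X₀ (R.jStar.obj Y₀) n).2 h
  have memYA : ∀ (Y₁ : ℬ), Y Y₁ → imageClass R.iShriek Y (R.iStar.obj Y₁) := fun Y₁ hY1 =>
    ⟨R.iIns.obj (R.iStar.obj Y₁), h₂ Y₁ hY1,
      ⟨(asIso (R.adj₂.unit.app (R.iStar.obj Y₁))).symm⟩⟩
  refine ⟨⟨⟨?_, ?_, ?_, ?_, ?_⟩, ?_⟩, ⟨?_, ?_, ?_, ?_, ?_⟩, ?_⟩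
  · rintro A B e ⟨M, hM, ⟨i⟩⟩
    exact ⟨M, hM, ⟨i ≪≫ e⟩⟩
  · rintro A B e ⟨M, hM, ⟨i⟩⟩
    exact ⟨M, hM, ⟨i ≪≫ e⟩⟩
  · rintro A B ⟨X₀, hX, ⟨eA⟩⟩ ⟨Y₀, hY, ⟨eB⟩⟩
    exact subsingleton_ext_of_iso eA eB 1
      (transA X₀ Y₀ 1 (hXY.ext_zero _ _ (h₁ X₀ hX) hY))
  · intro M
    obtain ⟨Y₁, X₁, f, g, w, hY1, hX1, hse⟩ := hXY.exists_left (R.iIns.obj M)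
    refine ⟨R.iStar.obj Y₁, R.iStar.obj X₁, R.iStar.map f,
      R.iStar.map g ≫ R.adj₁.counit.app M,
      by rw [← Category.assoc, ← R.iStar.map_comp, w, R.iStar.map_zero, zero_comp],
      memYA Y₁ hY1, ⟨X₁, hX1, ⟨Iso.refl _⟩⟩, ?_⟩
    refine ShortComplex.shortExact_of_iso ?_ (hse.map_of_exact R.iStar)
    let eM := asIso (R.adj₁.counit.app M)
    exact ShortComplex.isoMk (Iso.refl _) (Iso.refl _) eM
      (by simp [eM, ShortComplex.map]) (by simp [eM, ShortComplex.map])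
  · intro M
    obtain ⟨Y₁, X₁, f, g, w, hY1, hX1, hse⟩ := hXY.exists_right (R.iIns.obj M)
    refine ⟨R.iStar.obj Y₁, R.iStar.obj X₁,
      inv (R.adj₁.counit.app M) ≫ R.iStar.map f, R.iStar.map g,
      by rw [Category.assoc, ← R.iStar.map_comp, w, R.iStar.map_zero, comp_zero],
      memYA Y₁ hY1, ⟨X₁, hX1, ⟨Iso.refl _⟩⟩, ?_⟩
    refine ShortComplex.shortExact_of_iso ?_ (hse.map_of_exact R.iStar)
    let eM := asIso (R.adj₁.counit.app M)
    exact ShortComplex.isoMk eM (Iso.refl _) (Iso.refl _)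
      (by simp [eM, ShortComplex.map]) (by simp [eM, ShortComplex.map])
  · funext A'
    refine propext ⟨?_, ?_⟩
    · rintro ⟨Y₀, hY, ⟨e⟩⟩
      exact ⟨Y₀, hY, ⟨(iShriekIsoIStar R Y₀).symm ≪≫ e⟩⟩
    · rintro ⟨Y₀, hY, ⟨e⟩⟩
      exact ⟨Y₀, hY, ⟨iShriekIsoIStar R Y₀ ≪≫ e⟩⟩
  · rintro A B e ⟨M, hM, ⟨i⟩⟩
    exact ⟨M, hM, ⟨i ≪≫ e⟩⟩
  · rintro A B e ⟨M, hM, ⟨i⟩⟩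
    exact ⟨M, hM, ⟨i ≪≫ e⟩⟩
  · rintro A B ⟨X₀, hX, ⟨eA⟩⟩ ⟨Y₀, hY, ⟨eB⟩⟩
    exact subsingleton_ext_of_iso eA eB 1
      (transC X₀ Y₀ 1 (hXY.ext_zero _ _ hX (h₃ Y₀ hY)))
  · intro N
    obtain ⟨Y₁, X₁, f, g, w, hY1, hX1, hse⟩ := hXY.exists_left (R.jIns.obj N)
    refine ⟨R.jStar.obj Y₁, R.jStar.obj X₁, R.jStar.map f,
      R.jStar.map g ≫ R.adj₄.counit.app N,
      by rw [← Category.assoc, ← R.jStar.map_comp, w, R.jStar.map_zero, zero_comp],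
      ⟨Y₁, hY1, ⟨Iso.refl _⟩⟩, ⟨X₁, hX1, ⟨Iso.refl _⟩⟩, ?_⟩
    refine ShortComplex.shortExact_of_iso ?_ (hse.map_of_exact R.jStar)
    let eN := asIso (R.adj₄.counit.app N)
    exact ShortComplex.isoMk (Iso.refl _) (Iso.refl _) eN
      (by simp [eN, ShortComplex.map]) (by simp [eN, ShortComplex.map])
  · intro N
    obtain ⟨Y₁, X₁, f, g, w, hY1, hX1, hse⟩ := hXY.exists_right (R.jShriek.obj N)
    refine ⟨R.jStar.obj Y₁, R.jStar.obj X₁,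
      R.adj₃.unit.app N ≫ R.jStar.map f, R.jStar.map g,
      by rw [Category.assoc, ← R.jStar.map_comp, w, R.jStar.map_zero, comp_zero],
      ⟨Y₁, hY1, ⟨Iso.refl _⟩⟩, ⟨X₁, hX1, ⟨Iso.refl _⟩⟩, ?_⟩
    refine ShortComplex.shortExact_of_iso ?_ (hse.map_of_exact R.jStar)
    let eN := (asIso (R.adj₃.unit.app N)).symm
    exact ShortComplex.isoMk eN (Iso.refl _) (Iso.refl _)
      (by simp [eN, ShortComplex.map]) (by simp [eN, ShortComplex.map])
  · intro hher
    constructor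
    · rintro A B ⟨X₀, hX, ⟨eA⟩⟩ ⟨Y₀, hY, ⟨eB⟩⟩ i hi
      exact subsingleton_ext_of_iso eA eB i
        (transA X₀ Y₀ i (hher _ _ (h₁ X₀ hX) hY i hi))
    · rintro A B ⟨X₀, hX, ⟨eA⟩⟩ ⟨Y₀, hY, ⟨eB⟩⟩ i hi
      exact subsingleton_ext_of_iso eA eB i
        (transC X₀ Y₀ i (hher _ _ hX (h₃ Y₀ hY) i hi))


end Paper
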